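/- Let F be a forest and G a graph with exactly one cycle, both on n vertices, such that F and G have at least ⌊n/2⌋ + 1 common cards. Then the number of connected components of F is at most the number of connected components of G plus one. -/

import Mathlib

open SimpleGraph

/-- The vertex-deleted subgraph `G - v`: the induced subgraph on the remaining vertices. -/
def deleteVert {V : Type*} (G : SimpleGraph V) (v : V) : SimpleGraph {w : V // w ≠ v} :=
  G.induce {w : V | w ≠ v}

/-- `G` contains a cycle. -/
def HasCycleG {V : Type*} (G : SimpleGraph V) : Prop :=
  ∃ (u : V) (c : G.Walk u u), c.IsCycle

/-- `G` contains at least two distinct cycles (distinct as subgraphs,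
i.e. with different edge sets). -/
def TwoCycles {V : Type*} (G : SimpleGraph V) : Prop :=
  ∃ (u v : V) (c : G.Walk u u) (c' : G.Walk v v),
    c.IsCycle ∧ c'.IsCycle ∧ ¬ (∀ e, e ∈ c.edges ↔ e ∈ c'.edges)

/-- `G` contains exactly one cycle: it has a cycle, and any two cycles are equal
as subgraphs (have the same edge set). -/
def Unicyclic {V : Type*} (G : SimpleGraph V) : Prop :=
  HasCycleG G ∧ ∀ (u v : V) (c : G.Walk u u) (c' : G.Walk v v),
    c.IsCycle → c'.IsCycle → ∀ e, e ∈ c.edges ↔ e ∈ c'.edges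

/-- `F` and `G` have at least `k` common cards, i.e. the multiset intersection of their
decks has size at least `k`: there are `k` distinct vertices of `F` and `k` distinct
vertices of `G` whose corresponding vertex-deleted subgraphs are pairwise isomorphic. -/
def CommonCards {V W : Type*} (F : SimpleGraph V) (G : SimpleGraph W) (k : ℕ) : Prop :=
  ∃ (f : Fin k ↪ V) (g : Fin k ↪ W),
    ∀ i, Nonempty (deleteVert F (f i) ≃g deleteVert G (g i))

section Aux

variable {V : Type*}

private lemma card_subtype_ne {α : Type*} [Finite α] (a : α) :
    Nat.card {x : α // x ≠ a} + 1 = Nat.card α := by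
  classical
  cases nonempty_fintype α
  rw [Nat.card_eq_fintype_card, Nat.card_eq_fintype_card, Fintype.card_subtype]
  rw [show (Finset.univ.filter (fun x => x ≠ a)) = Finset.univ.erase a by
    ext x; simp [Finset.mem_erase, and_comm]]
  exact Finset.card_erase_add_one (Finset.mem_univ a)

/-- Key walk decomposition lemma: a walk in `G` either survives the deletion of the
edge `s(u,v)`, or it connects its endpoints to `u` and `v` in the deleted graph. -/
private lemma reach_aux {G : SimpleGraph V} {u v x y : V} (p : G.Walk x y) :
    (G \ fromEdgeSet {s(u,v)}).Reachable x y ∨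
      ((G \ fromEdgeSet {s(u,v)}).Reachable x u ∧ (G \ fromEdgeSet {s(u,v)}).Reachable v y) ∨
      ((G \ fromEdgeSet {s(u,v)}).Reachable x v ∧ (G \ fromEdgeSet {s(u,v)}).Reachable u y) := by
  induction p with
  | nil => exact Or.inl (Reachable.refl _)
  | @cons x z y h q ih =>
    by_cases he : s(x, z) = s(u, v)
    · rw [Sym2.eq_iff] at he
      rcases he with ⟨rfl, rfl⟩ | ⟨rfl, rfl⟩
      · rcases ih with h1 | ⟨h2, h3⟩ | ⟨h2, h3⟩
        · exact Or.inr (Or.inl ⟨Reachable.refl _, h1⟩)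
        · exact Or.inr (Or.inl ⟨Reachable.refl _, h3⟩)
        · exact Or.inl h3
      · rcases ih with h1 | ⟨h2, h3⟩ | ⟨h2, h3⟩
        · exact Or.inr (Or.inr ⟨Reachable.refl _, h1⟩)
        · exact Or.inl h3
        · exact Or.inr (Or.inr ⟨Reachable.refl _, h3⟩)
    · have hadj : (G \ fromEdgeSet {s(u,v)}).Adj x z := by
        rw [sdiff_adj, fromEdgeSet_adj]
        exact ⟨h, fun hc => he hc.1⟩
      rcases ih with h1 | ⟨h2, h3⟩ | ⟨h2, h3⟩
      · exact Or.inl (hadj.reachable.trans h1)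
      · exact Or.inr (Or.inl ⟨hadj.reachable.trans h2, h3⟩)
      · exact Or.inr (Or.inr ⟨hadj.reachable.trans h2, h3⟩)

/-- Deleting a non-bridge edge does not change the number of connected components. -/
private lemma card_cc_sdiff_of_reachable {G : SimpleGraph V} {u v : V}
    (hr : (G \ fromEdgeSet {s(u,v)}).Reachable u v) :
    Nat.card (G \ fromEdgeSet {s(u,v)}).ConnectedComponent = Nat.card G.ConnectedComponent := by
  apply Nat.card_congr
  refine Equiv.ofBijective
    (ConnectedComponent.map (Hom.ofLE (sdiff_le : G \ fromEdgeSet {s(u,v)} ≤ G)))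
    ⟨?_, ?_⟩
  · intro C D
    refine ConnectedComponent.ind₂ (fun x y h => ?_) C D
    simp only [ConnectedComponent.map_mk, Hom.ofLE_apply,
      ConnectedComponent.eq] at h
    obtain ⟨p⟩ := h
    rw [ConnectedComponent.eq]
    rcases reach_aux p with h1 | ⟨h2, h3⟩ | ⟨h2, h3⟩
    · exact h1
    · exact (h2.trans hr).trans h3
    · exact (h2.trans hr.symm).trans h3
  · intro C
    obtain ⟨x, hx⟩ := C.exists_rep
    exact ⟨(G \ fromEdgeSet {s(u,v)}).connectedComponentMk x, hx ▸ rfl⟩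

/-- Deleting a bridge edge increases the number of connected components by one. -/
private lemma card_cc_sdiff_of_not_reachable [Finite V] {G : SimpleGraph V} {u v : V}
    (huv : G.Adj u v)
    (hnr : ¬ (G \ fromEdgeSet {s(u,v)}).Reachable u v) :
    Nat.card (G \ fromEdgeSet {s(u,v)}).ConnectedComponent
      = Nat.card G.ConnectedComponent + 1 := by
  set G' := G \ fromEdgeSet {s(u,v)} with hG'
  have key : Nat.card {D : G'.ConnectedComponent // D ≠ G'.connectedComponentMk v}
      = Nat.card G.ConnectedComponent := by
    apply Nat.card_congr
    refine Equiv.ofBijective (fun D =>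
      (D : {D : G'.ConnectedComponent // D ≠ G'.connectedComponentMk v}).1.map
        (Hom.ofLE (sdiff_le : G' ≤ G))) ⟨?_, ?_⟩
    · have inj' : ∀ (C D : G'.ConnectedComponent),
          C ≠ G'.connectedComponentMk v → D ≠ G'.connectedComponentMk v →
          C.map (Hom.ofLE (sdiff_le : G' ≤ G))
            = D.map (Hom.ofLE (sdiff_le : G' ≤ G)) → C = D := by
        refine ConnectedComponent.ind₂ (fun x y hCx hDy h => ?_)
        replace h : G.Reachable x y := ConnectedComponent.exact h
        obtain ⟨p⟩ := h
        rcases reach_aux p with h1 | ⟨h2, h3⟩ | ⟨h2, h3⟩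
        · exact ConnectedComponent.sound h1
        · exact absurd (ConnectedComponent.sound h3.symm) hDy
        · exact absurd (ConnectedComponent.sound h2) hCx
      rintro ⟨C, hC⟩ ⟨D, hD⟩ h
      exact Subtype.ext (inj' C D hC hD h)
    · intro C
      obtain ⟨x, rfl⟩ := C.exists_rep
      by_cases hx : G'.Reachable x v
      · refine ⟨⟨G'.connectedComponentMk u, fun h => hnr (ConnectedComponent.exact h)⟩, ?_⟩
        simp only [ConnectedComponent.map_mk, Hom.ofLE_apply]
        exact ConnectedComponent.sound ((hx.mono sdiff_le).trans huv.symm.reachable).symm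
      · exact ⟨⟨G'.connectedComponentMk x, fun h => hx (ConnectedComponent.exact h)⟩, rfl⟩
  have := card_subtype_ne (G'.connectedComponentMk v)
  omega

private lemma isAcyclic_anti {G H : SimpleGraph V} (hle : H ≤ G) (hG : G.IsAcyclic) :
    H.IsAcyclic :=
  fun _ c hc => hG (c.mapLe hle) (hc.mapLe hle)

private lemma edgeSet_sdiff_single {G : SimpleGraph V} {u v : V} :
    (G \ fromEdgeSet {s(u,v)}).edgeSet = G.edgeSet \ {s(u,v)} := by
  rw [edgeSet_sdiff, edgeSet_fromEdgeSet, edgeSet_sdiff_sdiff_isDiag]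

private lemma nat_card_edgeSet_sdiff_single {G : SimpleGraph V} {u v : V}
    (h : s(u,v) ∈ G.edgeSet) [Finite V] :
    Nat.card (G \ fromEdgeSet {s(u,v)}).edgeSet + 1 = Nat.card G.edgeSet := by
  rw [edgeSet_sdiff_single, Nat.card_coe_set_eq, Nat.card_coe_set_eq]
  have h2 := Set.ncard_diff_add_ncard_of_subset (Set.singleton_subset_iff.mpr h)
    (Set.toFinite _)
  rwa [Set.ncard_singleton] at h2

/-- The number of connected components plus the number of edges of a forest equals
the number of vertices. -/
private lemma acyclic_formula : ∀ (m : ℕ) {V : Type*} [Fintype V] (G : SimpleGraph V),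
    G.IsAcyclic → Nat.card G.edgeSet = m →
    Nat.card G.ConnectedComponent + m = Fintype.card V := by
  intro m
  induction m with
  | zero =>
    intro V _ G _ hm
    have : IsEmpty G.edgeSet := by
      rcases Nat.card_eq_zero.mp hm with h | h
      · exact h
      · exact absurd h (by exact not_infinite_iff_finite.mpr (Set.toFinite _))
    have hbot : G = ⊥ := edgeSet_eq_empty.mp (Set.isEmpty_coe_sort.mp this)
    subst hbot
    rw [← Nat.card_eq_fintype_card, Nat.add_zero]
    apply Nat.card_congr
    refine (Equiv.ofBijective (fun x => (⊥ : SimpleGraph V).connectedComponentMk x)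
      ⟨fun a b h => reachable_bot.mp (ConnectedComponent.exact h), ?_⟩).symm
    intro C
    obtain ⟨x, hx⟩ := C.exists_rep
    exact ⟨x, hx⟩
  | succ m ih =>
    intro V _ G hacyc hm
    have hne : G.edgeSet.Nonempty := by
      rw [Set.nonempty_iff_ne_empty]
      intro h
      rw [← Set.isEmpty_coe_sort] at h
      rw [Nat.card_of_isEmpty] at hm
      omega
    obtain ⟨e₀, he₀⟩ := hne
    induction e₀ using Sym2.ind with
    | _ u v =>
      have huv : G.Adj u v := (mem_edgeSet _).mp he₀
      have hacyc' : (G \ fromEdgeSet {s(u,v)}).IsAcyclic := isAcyclic_anti sdiff_le hacyc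
      have hE : Nat.card (G \ fromEdgeSet {s(u,v)}).edgeSet + 1 = m + 1 :=
        hm ▸ nat_card_edgeSet_sdiff_single he₀
      have hbr : G.IsBridge s(u,v) := isAcyclic_iff_forall_adj_isBridge.mp hacyc huv
      have hnr : ¬ (G \ fromEdgeSet {s(u,v)}).Reachable u v := isBridge_iff.mp hbr
      have hcc := card_cc_sdiff_of_not_reachable huv hnr
      have hih := ih (G \ fromEdgeSet {s(u,v)}) hacyc' (by omega)
      omega

/-- The number of connected components plus the number of edges of a unicyclic graph
equals the number of vertices plus one. -/
private lemma unicyclic_formula {V : Type*} [Fintype V] {G : SimpleGraph V}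
    (hG : Unicyclic G) :
    Nat.card G.ConnectedComponent + Nat.card G.edgeSet = Fintype.card V + 1 := by
  obtain ⟨⟨u, c, hc⟩, huniq⟩ := hG
  have hlen := hc.three_le_length
  have hne : c.edges ≠ [] := by
    intro h
    have := c.length_edges
    rw [h] at this
    simp at this
    omega
  obtain ⟨e₀, he₀⟩ := List.exists_mem_of_ne_nil _ hne
  have he₀' : e₀ ∈ G.edgeSet := c.edges_subset_edgeSet he₀
  induction e₀ using Sym2.ind with
  | _ x y =>
    have hxy : G.Adj x y := c.adj_of_mem_edges he₀
    have hr : (G \ fromEdgeSet {s(x,y)}).Reachable x y :=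
      (adj_and_reachable_delete_edges_iff_exists_cycle.mpr ⟨u, c, hc, he₀⟩).2
    have hacyc' : (G \ fromEdgeSet {s(x,y)}).IsAcyclic := by
      intro a c' hc'
      have hcyc'' : (c'.mapLe (sdiff_le : G \ fromEdgeSet {s(x,y)} ≤ G)).IsCycle :=
        hc'.mapLe _
      have hmem := (huniq _ _ c (c'.mapLe sdiff_le) hc hcyc'' s(x,y)).mp he₀
      simp only [Walk.mapLe, Walk.edges_map, List.mem_map,
        Hom.ofLE_apply, Sym2.map_id', id] at hmem
      obtain ⟨e, he, rfl⟩ := hmem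
      have := c'.edges_subset_edgeSet he
      rw [edgeSet_sdiff_single] at this
      exact this.2 rfl
    have hE := nat_card_edgeSet_sdiff_single he₀'
    have hcc := card_cc_sdiff_of_reachable hr
    have hform := acyclic_formula _ (G \ fromEdgeSet {s(x,y)}) hacyc' rfl
    omega

/-- Deleting a vertex removes exactly `deg v` edges. -/
private lemma deleteVert_edge_card {V : Type*} [Fintype V] [DecidableEq V]
    (G : SimpleGraph V) [DecidableRel G.Adj] (w : V) :
    Nat.card (deleteVert G w).edgeSet + G.degree w = Nat.card G.edgeSet := by
  classical
  have himg : Sym2.map (Subtype.val : {x : V // x ≠ w} → V) '' (deleteVert G w).edgeSet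
      = G.edgeSet \ G.incidenceSet w := by
    ext e
    constructor
    · rintro ⟨e', he', rfl⟩
      induction e' using Sym2.ind with
      | _ a b =>
        rw [Sym2.map_pair_eq]
        have hab : (deleteVert G w).Adj a b := (mem_edgeSet _).mp he'
        have hab' : G.Adj a.1 b.1 := hab
        refine ⟨(mem_edgeSet _).mpr hab', fun hinc => ?_⟩
        rcases Sym2.mem_iff.mp hinc.2 with h | h
        · exact a.2 h.symm
        · exact b.2 h.symm
    · intro he
      induction e using Sym2.ind with
      | _ a b =>
        rw [Set.mem_diff, mem_edgeSet] at he
        obtain ⟨hadj, hninc⟩ := he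
        have ha : a ≠ w := fun h =>
          hninc ⟨(mem_edgeSet _).mpr hadj, Sym2.mem_iff.mpr (Or.inl h.symm)⟩
        have hb : b ≠ w := fun h =>
          hninc ⟨(mem_edgeSet _).mpr hadj, Sym2.mem_iff.mpr (Or.inr h.symm)⟩
        refine ⟨s(⟨a, ha⟩, ⟨b, hb⟩), (mem_edgeSet _).mpr ?_, by rw [Sym2.map_pair_eq]⟩
        show G.Adj a b
        exact hadj
  have hcard1 : Nat.card (deleteVert G w).edgeSet = (G.edgeSet \ G.incidenceSet w).ncard := by
    rw [← himg, Set.ncard_image_of_injective _ (Sym2.map.injective Subtype.val_injective),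
      Nat.card_coe_set_eq]
  have h2 : (G.edgeSet \ G.incidenceSet w).ncard + (G.incidenceSet w).ncard
      = G.edgeSet.ncard :=
    Set.ncard_diff_add_ncard_of_subset (G.incidenceSet_subset w) (Set.toFinite _)
  have h3 : (G.incidenceSet w).ncard = G.degree w := by
    rw [← Nat.card_coe_set_eq, Nat.card_eq_fintype_card]
    exact G.card_incidenceSet_eq_degree w
  rw [hcard1, Nat.card_coe_set_eq]
  omega

private lemma handshake {V : Type*} [Fintype V] [DecidableEq V]
    (G : SimpleGraph V) [DecidableRel G.Adj] :
    2 * Nat.card G.edgeSet = ∑ v, G.degree v := by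
  have h1 := G.sum_degrees_eq_twice_card_edges
  have h2 : (G.edgeFinset).card = Nat.card G.edgeSet := by
    rw [Nat.card_eq_fintype_card]
    exact Set.toFinset_card _
  omega

private lemma eq_of_reachable_degree_zero {V : Type*} [Fintype V] {G : SimpleGraph V}
    [DecidableRel G.Adj] {x y : V} (hx : G.degree x = 0) (h : G.Reachable x y) : x = y := by
  obtain ⟨p⟩ := h
  cases p with
  | nil => rfl
  | cons h q =>
    exfalso
    have : _ ∈ G.neighborFinset x := (G.mem_neighborFinset x _).mpr h
    rw [Finset.card_eq_zero.mp hx] at this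
    exact absurd this (Finset.notMem_empty _)

end Aux

/-- If a forest `F` and a graph `G` with exactly one cycle, both on `n`
vertices, have at least `⌊n/2⌋ + 1` common cards, then the number of connected components
of `F` is at most the number of connected components of `G` plus one. -/
theorem stmt8 {V W : Type*} [Fintype V] [Fintype W]
    (F : SimpleGraph V) (G : SimpleGraph W)
    (n : ℕ) (hnV : Fintype.card V = n) (hnW : Fintype.card W = n)
    (hF : F.IsAcyclic) (hG : Unicyclic G)
    (hcc : CommonCards F G (n / 2 + 1)) :
    Nat.card F.ConnectedComponent ≤ Nat.card G.ConnectedComponent + 1 := by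
  classical
  set k := n / 2 + 1 with hk
  obtain ⟨f, g, hfg⟩ := hcc
  -- edge/component notation
  set eF := Nat.card F.edgeSet with heF
  set eG := Nat.card G.edgeSet with heG
  have hFform : Nat.card F.ConnectedComponent + eF = n :=
    hnV ▸ acyclic_formula eF F hF rfl
  have hGform : Nat.card G.ConnectedComponent + eG = n + 1 :=
    hnW ▸ unicyclic_formula hG
  -- the degree relation coming from each common card
  have hrel : ∀ i : Fin k, eF + G.degree (g i) = eG + F.degree (f i) := by
    intro i
    have h1 := deleteVert_edge_card F (f i)
    have h2 := deleteVert_edge_card G (g i)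
    have hiso : Nat.card (deleteVert F (f i)).edgeSet
        = Nat.card (deleteVert G (g i)).edgeSet :=
      Nat.card_congr (hfg i).some.mapEdgeSet
    omega
  -- Main claim: eG ≤ eF + 2
  have hmain : eG ≤ eF + 2 := by
    by_contra hlt
    push_neg at hlt
    -- so eG ≥ eF + 3 and every g i has degree ≥ 3
    have hdeg3 : ∀ i : Fin k, 3 ≤ G.degree (g i) := fun i => by have := hrel i; omega
    set S : Finset W := Finset.univ.image g with hS
    have hScard : S.card = k := by
      rw [hS, Finset.card_image_of_injective _ g.injective, Finset.card_univ,
        Fintype.card_fin]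
    have hSdeg : ∀ w ∈ S, 3 ≤ G.degree w := by
      intro w hw
      rw [hS, Finset.mem_image] at hw
      obtain ⟨i, _, rfl⟩ := hw
      exact hdeg3 i
    set T : Finset W := Finset.univ \ S with hT
    have hTcard : T.card + k = n := by
      rw [hT, ← hScard, Finset.card_sdiff_add_card_eq_card (Finset.subset_univ S),
        Finset.card_univ, hnW]
    set Z : Finset W := T.filter (fun w => G.degree w = 0) with hZ
    set NZ : Finset W := T.filter (fun w => ¬ G.degree w = 0) with hNZ
    have hZNZ : Z.card + NZ.card = T.card :=
      Finset.card_filter_add_card_filter_not _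
    -- the vertex on the cycle has positive degree
    obtain ⟨u, c, hcyc⟩ := hG.1
    have hu : G.degree u ≠ 0 := by
      cases c with
      | nil => exact absurd rfl hcyc.ne_nil
      | cons h q =>
        have : 0 < G.degree u := (G.degree_pos_iff_exists_adj u).mpr ⟨_, h⟩
        omega
    -- isolated vertices plus the cycle component give a lower bound on components
    have hZcc : Z.card + 1 ≤ Nat.card G.ConnectedComponent := by
      have huZ : u ∉ Z := by
        rw [hZ, Finset.mem_filter]
        tauto
      have hinj : Set.InjOn (fun w => G.connectedComponentMk w) (insert u Z : Finset W) := by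
        intro a ha b hb hab
        simp only [Finset.coe_insert, Set.mem_insert_iff, Finset.mem_coe] at ha hb
        have hreach : G.Reachable a b := ConnectedComponent.exact hab
        rcases ha with rfl | ha
        · rcases hb with rfl | hb
          · rfl
          · have hbz : G.degree b = 0 := (Finset.mem_filter.mp hb).2
            exact (eq_of_reachable_degree_zero hbz hreach.symm).symm
        · have haz : G.degree a = 0 := (Finset.mem_filter.mp ha).2
          exact eq_of_reachable_degree_zero haz hreach
      have hcard := Finset.card_le_card_of_injOn (fun w => G.connectedComponentMk w)
        (fun w _ => Finset.mem_univ _) hinj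
      rw [Finset.card_insert_of_notMem huZ, Finset.card_univ] at hcard
      rw [Nat.card_eq_fintype_card]
      omega
    -- degree sum bounds
    have hsum : 2 * eG = ∑ w, G.degree w := handshake G
    have hsplit : ∑ w ∈ T, G.degree w + ∑ w ∈ S, G.degree w = ∑ w, G.degree w := by
      rw [hT]
      exact Finset.sum_sdiff (Finset.subset_univ S)
    have hSsum : 3 * k ≤ ∑ w ∈ S, G.degree w := by
      calc 3 * k = S.card * 3 := by omega
      _ ≤ ∑ w ∈ S, G.degree w := Finset.card_nsmul_le_sum S _ 3 hSdeg
    have hNZsum : NZ.card ≤ ∑ w ∈ T, G.degree w := by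
      calc NZ.card = NZ.card * 1 := by omega
      _ ≤ ∑ w ∈ NZ, G.degree w := Finset.card_nsmul_le_sum NZ _ 1 (fun w hw => by
          have := (Finset.mem_filter.mp hw).2; omega)
      _ ≤ ∑ w ∈ T, G.degree w := Finset.sum_le_sum_of_subset (Finset.filter_subset _ _)
    omega
  omega
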